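/- For every prime p ≥ 3 and every integer m with 0 ≤ m ≤ p−1 one has (1/p^{p−1})·∑_{j=m}^{p−1} C(p−1, j)·(p−1)^{p−1−j} ≤ (1/p^m)·C(p−1, m), with strict inequality whenever 1 ≤ m ≤ p−2 (and equality for m = 0 and m = p−1). Here C(a, b) denotes the binomial coefficient. -/

import Mathlib

lemma key_identity (n m x : ℕ) (hm : m ≤ n) :
    n.choose m * (1 + x) ^ (n - m) =
      ∑ j ∈ Finset.Icc m n, n.choose j * (j.choose m * x ^ (n - j)) := by
  rw [add_pow, Finset.mul_sum]
  rw [show Finset.Icc m n = Finset.Ico m (n + 1) by rw [Finset.Ico_add_one_right_eq_Icc]]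
  rw [Finset.sum_Ico_eq_sum_range]
  rw [show n + 1 - m = n - m + 1 by omega]
  refine Finset.sum_congr rfl ?_
  intro k hk
  simp only [Finset.mem_range] at hk
  have hkn : m + k ≤ n := by omega
  have h2 : n.choose (m + k) * (m + k).choose m = n.choose m * (n - m).choose k := by
    have := Nat.choose_mul (n := n) (Nat.le_add_right m k)
    simpa using this
  rw [show n - (m + k) = n - m - k from by omega]
  simp only [one_pow, one_mul, Nat.cast_id]
  rw [show n.choose (m + k) * ((m + k).choose m * x ^ (n - m - k)) =
      n.choose (m + k) * (m + k).choose m * x ^ (n - m - k) from by ring, h2]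
  ring

lemma one_lt_choose' {n m : ℕ} (h1 : 1 ≤ m) (h2 : m + 1 ≤ n) : 1 < n.choose m := by
  obtain ⟨n', rfl⟩ : ∃ n', n = n' + 1 := ⟨n - 1, by omega⟩
  obtain ⟨m', rfl⟩ : ∃ m', m = m' + 1 := ⟨m - 1, by omega⟩
  rw [Nat.choose_succ_succ]
  simp only [Nat.succ_eq_add_one]
  have ha := Nat.choose_pos (show m' ≤ n' by omega)
  have hb := Nat.choose_pos (show m' + 1 ≤ n' by omega)
  omega

lemma nat_ineq (n m x : ℕ) (hm : m ≤ n) :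
    ∑ j ∈ Finset.Icc m n, n.choose j * x ^ (n - j) ≤ n.choose m * (1 + x) ^ (n - m) := by
  rw [key_identity n m x hm]
  refine Finset.sum_le_sum ?_
  intro j hj
  simp only [Finset.mem_Icc] at hj
  have h1 : 1 ≤ j.choose m := Nat.choose_pos hj.1
  calc n.choose j * x ^ (n - j) = n.choose j * (1 * x ^ (n - j)) := by ring
    _ ≤ n.choose j * (j.choose m * x ^ (n - j)) := by
        exact Nat.mul_le_mul_left _ (Nat.mul_le_mul_right _ h1)

lemma nat_ineq_strict (n m x : ℕ) (h1 : 1 ≤ m) (h2 : m + 1 ≤ n) :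
    ∑ j ∈ Finset.Icc m n, n.choose j * x ^ (n - j) < n.choose m * (1 + x) ^ (n - m) := by
  rw [key_identity n m x (by omega)]
  refine Finset.sum_lt_sum (fun j hj => ?_) ⟨n, Finset.mem_Icc.mpr ⟨by omega, le_rfl⟩, ?_⟩
  · simp only [Finset.mem_Icc] at hj
    have h1 : 1 ≤ j.choose m := Nat.choose_pos hj.1
    calc n.choose j * x ^ (n - j) = n.choose j * (1 * x ^ (n - j)) := by ring
      _ ≤ n.choose j * (j.choose m * x ^ (n - j)) := by
          exact Nat.mul_le_mul_left _ (Nat.mul_le_mul_right _ h1)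
  · have := one_lt_choose' h1 h2
    simp [Nat.choose_self, Nat.sub_self]
    omega

/-- Lemma 7.4 (i). For every prime `p ≥ 3` and every `0 ≤ m ≤ p−1`,
`(1/p^{p−1})·∑_{j=m}^{p−1} C(p−1,j)·(p−1)^{p−1−j} ≤ (1/p^m)·C(p−1,m)`, with strict
inequality for `1 ≤ m ≤ p−2` and equality for `m = 0` and `m = p−1`. -/
theorem statement18 (p : ℕ) (hp : p.Prime) (hp3 : 3 ≤ p) (m : ℕ) (hm : m ≤ p - 1) :
    ((1 : ℝ) / (p : ℝ) ^ (p - 1)) *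
        ∑ j ∈ Finset.Icc m (p - 1), ((p - 1).choose j : ℝ) * ((p : ℝ) - 1) ^ (p - 1 - j) ≤
      ((1 : ℝ) / (p : ℝ) ^ m) * ((p - 1).choose m : ℝ) ∧
    (1 ≤ m → m ≤ p - 2 →
      ((1 : ℝ) / (p : ℝ) ^ (p - 1)) *
          ∑ j ∈ Finset.Icc m (p - 1), ((p - 1).choose j : ℝ) * ((p : ℝ) - 1) ^ (p - 1 - j) <
        ((1 : ℝ) / (p : ℝ) ^ m) * ((p - 1).choose m : ℝ)) ∧
    (m = 0 →
      ((1 : ℝ) / (p : ℝ) ^ (p - 1)) *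
          ∑ j ∈ Finset.Icc m (p - 1), ((p - 1).choose j : ℝ) * ((p : ℝ) - 1) ^ (p - 1 - j) =
        ((1 : ℝ) / (p : ℝ) ^ m) * ((p - 1).choose m : ℝ)) ∧
    (m = p - 1 →
      ((1 : ℝ) / (p : ℝ) ^ (p - 1)) *
          ∑ j ∈ Finset.Icc m (p - 1), ((p - 1).choose j : ℝ) * ((p : ℝ) - 1) ^ (p - 1 - j) =
        ((1 : ℝ) / (p : ℝ) ^ m) * ((p - 1).choose m : ℝ)) := by
  set n := p - 1 with hn
  have hpn : p = n + 1 := by omega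
  have hn2 : 2 ≤ n := by omega
  have hcast : ((p : ℝ) - 1) = ((n : ℕ) : ℝ) := by
    rw [hpn]; push_cast; ring
  -- Rewrite the sum as a cast of a natural number sum
  have hsum : ∑ j ∈ Finset.Icc m n, ((n.choose j : ℝ)) * ((p : ℝ) - 1) ^ (n - j)
      = ((∑ j ∈ Finset.Icc m n, n.choose j * ((n : ℕ)) ^ (n - j) : ℕ) : ℝ) := by
    rw [hcast]; push_cast; rfl
  have hppos : (0 : ℝ) < (p : ℝ) := by positivity
  have hpn_pow : (0 : ℝ) < (p : ℝ) ^ n := by positivity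
  have hpm_pow : (0 : ℝ) < (p : ℝ) ^ m := by positivity
  have hpow_split : ((p : ℝ)) ^ n = (p : ℝ) ^ m * (p : ℝ) ^ (n - m) := by
    rw [← pow_add]; congr 1; omega
  have hone_x : (1 + n : ℕ) = p := by omega
  -- main inequality in ℕ
  have hN : ∑ j ∈ Finset.Icc m n, n.choose j * ((n : ℕ)) ^ (n - j) ≤ n.choose m * p ^ (n - m) := by
    have := nat_ineq n m n hm
    rwa [hone_x] at this
  -- transfer to ℝ
  have hmain : ((1 : ℝ) / (p : ℝ) ^ n) *
      ∑ j ∈ Finset.Icc m n, ((n.choose j : ℝ)) * ((p : ℝ) - 1) ^ (n - j) ≤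
      ((1 : ℝ) / (p : ℝ) ^ m) * (n.choose m : ℝ) := by
    rw [hsum, div_mul_eq_mul_div, div_mul_eq_mul_div, div_le_div_iff₀ hpn_pow hpm_pow]
    have : ((∑ j ∈ Finset.Icc m n, n.choose j * ((n : ℕ)) ^ (n - j) : ℕ) : ℝ)
        ≤ ((n.choose m * p ^ (n - m) : ℕ) : ℝ) := by exact_mod_cast hN
    calc (1 : ℝ) * ((∑ j ∈ Finset.Icc m n, n.choose j * ((n : ℕ)) ^ (n - j) : ℕ) : ℝ) * (p : ℝ) ^ m
        ≤ ((n.choose m * p ^ (n - m) : ℕ) : ℝ) * (p : ℝ) ^ m := by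
          rw [one_mul]; exact mul_le_mul_of_nonneg_right this (le_of_lt hpm_pow)
      _ = 1 * (n.choose m : ℝ) * (p : ℝ) ^ n := by
          push_cast; rw [hpow_split]; ring
  refine ⟨hmain, ?_, ?_, ?_⟩
  · -- strict
    intro h1 h2
    have hmn : m + 1 ≤ n := by omega
    have hNs : ∑ j ∈ Finset.Icc m n, n.choose j * ((n : ℕ)) ^ (n - j)
        < n.choose m * p ^ (n - m) := by
      have := nat_ineq_strict n m n h1 hmn
      rwa [hone_x] at this
    rw [hsum, div_mul_eq_mul_div, div_mul_eq_mul_div, div_lt_div_iff₀ hpn_pow hpm_pow]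
    have : ((∑ j ∈ Finset.Icc m n, n.choose j * ((n : ℕ)) ^ (n - j) : ℕ) : ℝ)
        < ((n.choose m * p ^ (n - m) : ℕ) : ℝ) := by exact_mod_cast hNs
    calc (1 : ℝ) * ((∑ j ∈ Finset.Icc m n, n.choose j * ((n : ℕ)) ^ (n - j) : ℕ) : ℝ) * (p : ℝ) ^ m
        < ((n.choose m * p ^ (n - m) : ℕ) : ℝ) * (p : ℝ) ^ m := by
          rw [one_mul]; exact mul_lt_mul_of_pos_right this hpm_pow
      _ = 1 * (n.choose m : ℝ) * (p : ℝ) ^ n := by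
          push_cast; rw [hpow_split]; ring
  · -- m = 0 equality
    intro hm0
    subst hm0
    have hid : n.choose 0 * (1 + n : ℕ) ^ (n - 0) =
        ∑ j ∈ Finset.Icc 0 n, n.choose j * (j.choose 0 * ((n : ℕ)) ^ (n - j)) :=
      key_identity n 0 n (Nat.zero_le n)
    simp only [Nat.choose_zero_right, one_mul, Nat.sub_zero, hone_x] at hid
    have hsum0 : ∑ j ∈ Finset.Icc 0 n, n.choose j * ((n : ℕ)) ^ (n - j) = p ^ n := by
      rw [← hid]
    rw [hsum, hsum0]
    simp only [Nat.choose_zero_right, pow_zero]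
    push_cast
    field_simp
  · -- m = n equality
    intro hmn
    subst hmn
    rw [Finset.Icc_self, Finset.sum_singleton]
    simp [Nat.choose_self, Nat.sub_self]
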